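/- Let C ⊆ 𝔽_q^n be a code with |C| = q^k for some integer 1 ≤ k ≤ n. Then C is diameter perfect if and only if C is MDS. In particular, an 𝔽_q-linear code C ⊆ 𝔽_q^n with C ≠ {0} is diameter perfect if and only if C is MDS. -/

import Mathlib

set_option linter.unusedSectionVars false

open scoped Classical

noncomputable section

variable {F : Type*} [Field F] [Fintype F]

def IsWeight (w : F → ℕ) : Prop :=
  (∀ a : F, w a = 0 ↔ a = 0) ∧ (∀ a : F, w (-a) = w a) ∧
    (∀ a b : F, w (a + b) ≤ w a + w b)

def Mw (w : F → ℕ) : ℕ := Finset.univ.sup w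

def mw (w : F → ℕ) : ℕ := sInf {s | ∃ a : F, a ≠ 0 ∧ w a = s}

def rho {n : ℕ} (u : Fin n → F) : ℕ :=
  (Finset.univ.filter fun j => u j ≠ 0).sup fun j => (j : ℕ) + 1

lemma rho_le {n : ℕ} (u : Fin n → F) : rho u ≤ n :=
  Finset.sup_le fun j _ => j.isLt

def chainWeight {n : ℕ} (w : F → ℕ) (u : Fin n → F) : ℕ :=
  if h : rho u = 0 then 0
  else w (u ⟨rho u - 1,
        lt_of_lt_of_le (Nat.sub_lt (Nat.pos_of_ne_zero h) Nat.one_pos) (rho_le u)⟩)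
      + (rho u - 1) * Mw w

def dChain {n : ℕ} (w : F → ℕ) (u v : Fin n → F) : ℕ := chainWeight w (u - v)

def ballW {n : ℕ} (w : F → ℕ) (x : Fin n → F) (r : ℕ) : Finset (Fin n → F) :=
  Finset.univ.filter fun v => dChain w x v ≤ r

def diamW {n : ℕ} (w : F → ℕ) (A : Finset (Fin n → F)) : ℕ :=
  (A ×ˢ A).sup fun p => dChain w p.1 p.2

def AstarW (w : F → ℕ) (n D : ℕ) : ℕ :=
  Finset.univ.sup fun A : Finset (Fin n → F) => if diamW w A ≤ D then A.card else 0

def winv (w : F → ℕ) (S : ℕ) : Finset F :=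
  Finset.univ.filter fun a => a ≠ 0 ∧ w a ≤ S

def dP {n : ℕ} (C : Finset (Fin n → F)) : ℕ :=
  sInf {s | ∃ x ∈ C, ∃ y ∈ C, x ≠ y ∧ rho (x - y) = s}

def dW {n : ℕ} (w : F → ℕ) (C : Finset (Fin n → F)) : ℕ :=
  sInf {s | ∃ x ∈ C, ∃ y ∈ C, x ≠ y ∧ dChain w x y = s}

def floorW (w : F → ℕ) (n D : ℕ) : ℕ :=
  (Finset.univ.filter fun u : Fin n → F => chainWeight w u < D).sup (chainWeight w)

def nonArch (w : F → ℕ) : Prop := ∀ a b : F, w (a + b) ≤ max (w a) (w b)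

def Sw (w : F → ℕ) : ℕ :=
  if nonArch w then Mw w
  else sInf {s | ∃ a b : F, max (w a) (w b) < w (a - b) ∧ max (w a) (w b) = s}

def WwCond (w : F → ℕ) (S : ℕ) (K : Finset F) : Prop :=
  (∀ a ∈ K, Sw w ≤ w a ∧ w a ≤ S) ∧
  (∀ a ∈ K, ∀ b : F, w b ≤ Sw w - 1 → w (a - b) ≤ S) ∧
  (∀ a ∈ K, ∀ b ∈ K, w (a - b) ≤ S)

def WwCard (w : F → ℕ) (S : ℕ) : ℕ :=
  Finset.univ.sup fun K : Finset F => if WwCond w S K then K.card else 0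

def idealOf {n : ℕ} (P : PartialOrder (Fin n)) (u : Fin n → F) : Finset (Fin n) :=
  Finset.univ.filter fun j => ∃ i : Fin n, u i ≠ 0 ∧ P.le j i

def maxOf {n : ℕ} (P : PartialOrder (Fin n)) (u : Fin n → F) : Finset (Fin n) :=
  (idealOf P u).filter fun j => ∀ k ∈ idealOf P u, P.le j k → j = k

def posetWeight {n : ℕ} (P : PartialOrder (Fin n)) (w : F → ℕ) (u : Fin n → F) : ℕ :=
  (∑ i ∈ maxOf P u, w (u i)) + Mw w * ((idealOf P u) \ (maxOf P u)).card

def dPoset {n : ℕ} (P : PartialOrder (Fin n)) (w : F → ℕ) (u v : Fin n → F) : ℕ :=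
  posetWeight P w (u - v)

def ballP {n : ℕ} (P : PartialOrder (Fin n)) (w : F → ℕ) (x : Fin n → F) (r : ℕ) :
    Finset (Fin n → F) :=
  Finset.univ.filter fun v => dPoset P w x v ≤ r

def diamP {n : ℕ} (P : PartialOrder (Fin n)) (w : F → ℕ) (A : Finset (Fin n → F)) : ℕ :=
  (A ×ˢ A).sup fun p => dPoset P w p.1 p.2

end

noncomputable section HelperSection
open Finset
variable {F : Type*} [Field F] [Fintype F] {n : ℕ} {w : F → ℕ}

lemma le_rho_of_ne {u : Fin n → F} {i : Fin n} (h : u i ≠ 0) : (i : ℕ) + 1 ≤ rho u :=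
  Finset.le_sup (f := fun j : Fin n => (j : ℕ) + 1)
    (Finset.mem_filter.2 ⟨Finset.mem_univ _, h⟩)

lemma rho_eq_zero_iff {u : Fin n → F} : rho u = 0 ↔ u = 0 := by
  constructor
  · intro h; funext i; by_contra hi
    have := le_rho_of_ne hi; omega
  · intro h; subst h; simp [rho]

lemma rho_spec {u : Fin n → F} (h : u ≠ 0) :
    ∃ j : Fin n, u j ≠ 0 ∧ (j : ℕ) + 1 = rho u := by
  have h0 : rho u ≠ 0 := fun hh => h (rho_eq_zero_iff.1 hh)
  have hne : (Finset.univ.filter fun j : Fin n => u j ≠ 0).Nonempty := by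
    by_contra hne
    rw [Finset.not_nonempty_iff_eq_empty] at hne
    simp [rho, hne] at h0
  obtain ⟨j, hj, hj2⟩ := Finset.exists_mem_eq_sup _ hne (fun j : Fin n => (j : ℕ) + 1)
  exact ⟨j, (Finset.mem_filter.1 hj).2, hj2.symm⟩

lemma chainWeight_zero : chainWeight w (0 : Fin n → F) = 0 := by
  have : rho (0 : Fin n → F) = 0 := rho_eq_zero_iff.2 rfl
  simp [chainWeight, this]

lemma chainWeight_eq {u : Fin n → F} {j : Fin n} (hj : u j ≠ 0) (hr : (j : ℕ) + 1 = rho u) :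
    chainWeight w u = w (u j) + (j : ℕ) * Mw w := by
  have h0 : rho u ≠ 0 := by omega
  have hfin : (⟨rho u - 1,
      lt_of_lt_of_le (Nat.sub_lt (Nat.pos_of_ne_zero h0) Nat.one_pos) (rho_le u)⟩ : Fin n) = j := by
    apply Fin.ext; simp; omega
  rw [chainWeight, dif_neg h0, hfin]
  have h1 : rho u - 1 = (j : ℕ) := by omega
  rw [h1]

lemma le_Mw (a : F) : w a ≤ Mw w := Finset.le_sup (Finset.mem_univ a)

lemma w_pos (hw : IsWeight w) {a : F} (ha : a ≠ 0) : 1 ≤ w a :=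
  Nat.one_le_iff_ne_zero.2 fun h => ha ((hw.1 a).1 h)

lemma Mw_pos (hw : IsWeight w) : 1 ≤ Mw w :=
  le_trans (w_pos hw one_ne_zero) (le_Mw 1)

lemma exists_wmax : ∃ c : F, w c = Mw w := by
  obtain ⟨c, _, hc⟩ := Finset.exists_mem_eq_sup Finset.univ Finset.univ_nonempty w
  exact ⟨c, hc.symm⟩

lemma chainWeight_le (u : Fin n → F) : chainWeight w u ≤ rho u * Mw w := by
  by_cases h : u = 0
  · subst h; simp [chainWeight_zero]
  · obtain ⟨j, hj, hr⟩ := rho_spec h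
    rw [chainWeight_eq hj hr]
    calc w (u j) + (j : ℕ) * Mw w ≤ Mw w + (j : ℕ) * Mw w :=
          Nat.add_le_add_right (le_Mw _) _
      _ = ((j : ℕ) + 1) * Mw w := by ring
      _ = rho u * Mw w := by rw [hr]

lemma chainWeight_ge (hw : IsWeight w) {u : Fin n → F} (h : u ≠ 0) :
    (rho u - 1) * Mw w + 1 ≤ chainWeight w u := by
  obtain ⟨j, hj, hr⟩ := rho_spec h
  rw [chainWeight_eq hj hr]
  have h1 : rho u - 1 = (j : ℕ) := by omega
  rw [h1]
  have := w_pos hw hj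
  linarith

lemma dChain_le_diam {A : Finset (Fin n → F)} {a b : Fin n → F} (ha : a ∈ A) (hb : b ∈ A) :
    dChain w a b ≤ diamW w A := by
  have h : ((a, b) : (Fin n → F) × (Fin n → F)) ∈ A ×ˢ A := Finset.mem_product.2 ⟨ha, hb⟩
  exact Finset.le_sup (f := fun p : (Fin n → F) × (Fin n → F) => dChain w p.1 p.2) h

lemma dP_le {C : Finset (Fin n → F)} {x y : Fin n → F} (hx : x ∈ C) (hy : y ∈ C)
    (hxy : x ≠ y) : dP C ≤ rho (x - y) :=
  Nat.sInf_le ⟨x, hx, y, hy, hxy, rfl⟩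

lemma dW_le {C : Finset (Fin n → F)} {x y : Fin n → F} (hx : x ∈ C) (hy : y ∈ C)
    (hxy : x ≠ y) : dW w C ≤ dChain w x y :=
  Nat.sInf_le ⟨x, hx, y, hy, hxy, rfl⟩

lemma exists_pair {C : Finset (Fin n → F)} (hC2 : 1 < C.card) :
    ∃ x ∈ C, ∃ y ∈ C, x ≠ y := by
  obtain ⟨x, hx, y, hy, hxy⟩ := Finset.one_lt_card.1 hC2
  exact ⟨x, hx, y, hy, hxy⟩

lemma dP_mem {C : Finset (Fin n → F)} (hC2 : 1 < C.card) :
    ∃ x ∈ C, ∃ y ∈ C, x ≠ y ∧ rho (x - y) = dP C := by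
  have hne : {s | ∃ x ∈ C, ∃ y ∈ C, x ≠ y ∧ rho (x - y) = s}.Nonempty := by
    obtain ⟨x, hx, y, hy, hxy⟩ := exists_pair hC2
    exact ⟨rho (x - y), x, hx, y, hy, hxy, rfl⟩
  exact Nat.sInf_mem hne

lemma dW_mem {C : Finset (Fin n → F)} (hC2 : 1 < C.card) :
    ∃ x ∈ C, ∃ y ∈ C, x ≠ y ∧ dChain w x y = dW w C := by
  have hne : {s | ∃ x ∈ C, ∃ y ∈ C, x ≠ y ∧ dChain w x y = s}.Nonempty := by
    obtain ⟨x, hx, y, hy, hxy⟩ := exists_pair hC2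
    exact ⟨dChain w x y, x, hx, y, hy, hxy, rfl⟩
  exact Nat.sInf_mem hne

lemma dP_pos {C : Finset (Fin n → F)} (hC2 : 1 < C.card) : 1 ≤ dP C := by
  obtain ⟨x, hx, y, hy, hxy, hd⟩ := dP_mem hC2
  rw [← hd]
  have hne : rho (x - y) ≠ 0 := fun h => (sub_ne_zero.2 hxy) (rho_eq_zero_iff.1 h)
  omega

lemma dP_le_n {C : Finset (Fin n → F)} (hC2 : 1 < C.card) : dP C ≤ n := by
  obtain ⟨x, hx, y, hy, hxy, hd⟩ := dP_mem hC2
  rw [← hd]; exact rho_le _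

lemma dW_gt (hw : IsWeight w) {C : Finset (Fin n → F)} (hC2 : 1 < C.card) :
    (dP C - 1) * Mw w + 1 ≤ dW w C := by
  obtain ⟨x, hx, y, hy, hxy, hd⟩ := dW_mem (w := w) hC2
  rw [← hd]
  have hsub : x - y ≠ 0 := sub_ne_zero.2 hxy
  have h1 := chainWeight_ge hw hsub
  have h2 : dP C ≤ rho (x - y) := dP_le hx hy hxy
  have h3 : (dP C - 1) * Mw w ≤ (rho (x - y) - 1) * Mw w :=
    Nat.mul_le_mul_right _ (by omega)
  calc (dP C - 1) * Mw w + 1 ≤ (rho (x - y) - 1) * Mw w + 1 := by omega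
    _ ≤ chainWeight w (x - y) := h1
    _ = dChain w x y := rfl

lemma dW_pos (hw : IsWeight w) {C : Finset (Fin n → F)} (hC2 : 1 < C.card) :
    1 ≤ dW w C := le_trans (by omega) (dW_gt hw hC2)

lemma floorW_lt {D : ℕ} (hD : 1 ≤ D) : floorW w n D < D := by
  apply Finset.sup_lt_iff (show (⊥ : ℕ) < D from hD) |>.2
  intro u hu
  exact (Finset.mem_filter.1 hu).2

lemma le_floorW {D : ℕ} {u : Fin n → F} (hu : chainWeight w u < D) :
    chainWeight w u ≤ floorW w n D :=
  Finset.le_sup (Finset.mem_filter.2 ⟨Finset.mem_univ _, hu⟩)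

/-- Lemma D: floorW of dW is at least (dP-1)*Mw. -/
lemma floorW_ge_dP (hw : IsWeight w) {C : Finset (Fin n → F)} (hC2 : 1 < C.card) :
    (dP C - 1) * Mw w ≤ floorW w n (dW w C) := by
  rcases Nat.lt_or_ge (dP C) 2 with h2 | h2
  · have h0 : dP C - 1 = 0 := by omega
    simp [h0]
  · obtain ⟨c, hc⟩ := exists_wmax (w := w)
    have hcne : c ≠ 0 := by
      intro h; subst h
      have := Mw_pos hw
      have h0 : w (0 : F) = 0 := (hw.1 0).2 rfl
      omega
    have hdn : dP C ≤ n := dP_le_n hC2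
    have hlt : dP C - 2 < n := by omega
    set u : Fin n → F := fun i => if (i : ℕ) = dP C - 2 then c else 0 with hu
    have huj : u ⟨dP C - 2, hlt⟩ ≠ 0 := by simp [hu, hcne]
    have hval : ((⟨dP C - 2, hlt⟩ : Fin n) : ℕ) = dP C - 2 := rfl
    have hrho : rho u = dP C - 1 := by
      apply le_antisymm
      · apply Finset.sup_le
        intro j hj
        have hj2 : u j ≠ 0 := (Finset.mem_filter.1 hj).2
        have : (j : ℕ) = dP C - 2 := by
          by_contra h; exact hj2 (by simp [hu, h])
        omega
      · have h := le_rho_of_ne huj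
        rw [hval] at h; omega
    have hcw : chainWeight w u = (dP C - 1) * Mw w := by
      rw [chainWeight_eq huj (by rw [hval, hrho]; omega)]
      have h1 : u ⟨dP C - 2, hlt⟩ = c := by simp [hu]
      rw [h1, hc, hval]
      have hexp : dP C - 1 = (dP C - 2) + 1 := by omega
      rw [hexp]; ring
    have hgt := dW_gt hw (C := C) hC2
    have hlt2 : chainWeight w u < dW w C := by rw [hcw]; omega
    rw [← hcw]
    exact le_floorW hlt2

lemma card_fun_eq : Fintype.card (Fin n → F) = Fintype.card F ^ n := by
  simp [Fintype.card_fun]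

/-- Code-anticode bound. -/
lemma code_anticode (A C : Finset (Fin n → F))
    (h : ∀ x ∈ C, ∀ y ∈ C, x ≠ y → diamW w A < dChain w x y) :
    A.card * C.card ≤ Fintype.card F ^ n := by
  rw [← Finset.card_product, ← card_fun_eq (F := F) (n := n), ← Finset.card_univ]
  apply Finset.card_le_card_of_injOn (fun p => p.1 + p.2) (fun _ _ => Finset.mem_univ _)
  rintro ⟨a, c⟩ hac ⟨a', c'⟩ hac' heq
  simp only [Finset.mem_coe, Finset.mem_product] at hac hac'
  simp only at heq
  have hcc : c = c' := by
    by_contra hne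
    have hsub : c - c' = a' - a := by
      rw [sub_eq_sub_iff_add_eq_add, add_comm c a]
      exact heq
    have h1 : dChain w c c' = dChain w a' a := by
      unfold dChain; rw [hsub]
    have h2 : dChain w a' a ≤ diamW w A := dChain_le_diam hac'.1 hac.1
    have h3 := h c hac.2 c' hac'.2 hne
    omega
  subst hcc
  have : a = a' := by
    have := heq
    exact add_right_cancel this
  simp [this]

/-- Anticode with small diameter is small. -/
lemma anticode_small (hw : IsWeight w) {A : Finset (Fin n → F)} {j : ℕ}
    (hj1 : 1 ≤ j) (hjn : j ≤ n) (hD : diamW w A < j * Mw w) :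
    A.card ≤ (Fintype.card F - 1) * Fintype.card F ^ (j - 1) := by
  rcases A.eq_empty_or_nonempty with hA | ⟨x₀, hx₀⟩
  · simp [hA]
  obtain ⟨c₀, hc₀⟩ := exists_wmax (w := w)
  have hc₀ne : c₀ ≠ 0 := by
    intro h; subst h
    have := Mw_pos hw
    have h0 : w (0 : F) = 0 := (hw.1 0).2 rfl
    omega
  have hjlt : j - 1 < n := by omega
  -- claim (i): coordinates ≥ j agree with x₀
  have claim1 : ∀ u ∈ A, ∀ i : Fin n, j ≤ (i : ℕ) → u i = x₀ i := by
    intro u hu i hi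
    by_contra hne
    have hsub : (u - x₀) i ≠ 0 := sub_ne_zero.2 hne
    have h1 : (i : ℕ) + 1 ≤ rho (u - x₀) := le_rho_of_ne hsub
    have h2 : (rho (u - x₀) - 1) * Mw w + 1 ≤ chainWeight w (u - x₀) :=
      chainWeight_ge hw (fun h => hsub (by rw [h]; rfl))
    have h3 : j * Mw w ≤ (rho (u - x₀) - 1) * Mw w :=
      Nat.mul_le_mul_right _ (by omega)
    have h4 : dChain w u x₀ ≤ diamW w A := dChain_le_diam hu hx₀
    have h5 : dChain w u x₀ = chainWeight w (u - x₀) := rfl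
    omega
  -- claim (ii): coordinate j-1 avoids x₀ (j-1) + c₀
  have claim2 : ∀ u ∈ A, u ⟨j - 1, hjlt⟩ ≠ x₀ ⟨j - 1, hjlt⟩ + c₀ := by
    intro u hu heq
    set v := u - x₀ with hv
    have hvj : v ⟨j - 1, hjlt⟩ = c₀ := by
      simp [hv, heq]
    have hvne : v ⟨j - 1, hjlt⟩ ≠ 0 := by rw [hvj]; exact hc₀ne
    have hval : ((⟨j - 1, hjlt⟩ : Fin n) : ℕ) = j - 1 := rfl
    have hrho : rho v = j := by
      apply le_antisymm
      · apply Finset.sup_le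
        intro i hi
        have hi2 : v i ≠ 0 := (Finset.mem_filter.1 hi).2
        by_contra hgt
        have : j ≤ (i : ℕ) := by omega
        have := claim1 u hu i this
        exact hi2 (by simp [hv, this])
      · have h := le_rho_of_ne hvne
        rw [hval] at h; omega
    have hcw : chainWeight w v = j * Mw w := by
      rw [chainWeight_eq hvne (by rw [hval, hrho]; omega), hvj, hc₀, hval]
      have hexp : j = (j - 1) + 1 := by omega
      calc Mw w + (j - 1) * Mw w = ((j - 1) + 1) * Mw w := by ring
        _ = j * Mw w := by rw [← hexp]
    have h4 : dChain w u x₀ ≤ diamW w A := dChain_le_diam hu hx₀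
    have h5 : dChain w u x₀ = chainWeight w v := rfl
    omega
  -- injection into (univ.erase t) ×ˢ univ
  set t := x₀ ⟨j - 1, hjlt⟩ + c₀ with ht
  have hcard : ((Finset.univ.erase t) ×ˢ (Finset.univ : Finset (Fin (j - 1) → F))).card
      = (Fintype.card F - 1) * Fintype.card F ^ (j - 1) := by
    rw [Finset.card_product, Finset.card_erase_of_mem (Finset.mem_univ _),
      Finset.card_univ, Finset.card_univ, card_fun_eq]
  rw [← hcard]
  apply Finset.card_le_card_of_injOn
    (fun u => (u ⟨j - 1, hjlt⟩, fun i : Fin (j - 1) => u (Fin.castLE (by omega : j - 1 ≤ n) i)))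
  · intro u hu
    simp only [Finset.mem_coe] at hu
    apply Finset.mem_product.2
    constructor
    · exact Finset.mem_erase.2 ⟨claim2 u hu, Finset.mem_univ _⟩
    · exact Finset.mem_univ _
  · intro u hu u' hu' heq
    simp only [Finset.mem_coe] at hu hu'
    simp only [Prod.mk.injEq] at heq
    funext i
    rcases Nat.lt_or_ge (i : ℕ) (j - 1) with h | h
    · have := congrFun heq.2 ⟨(i : ℕ), h⟩
      simpa using this
    · rcases Nat.lt_or_ge (i : ℕ) j with h2 | h2
      · have hieq : i = ⟨j - 1, hjlt⟩ := Fin.ext (show (i : ℕ) = j - 1 by omega)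
        rw [hieq]; exact heq.1
      · rw [claim1 u hu i h2, claim1 u' hu' i h2]

/-- The big anticode: vectors supported on the first m coordinates. -/
lemma big_anticode (m : ℕ) (hm : m ≤ n) :
    ∃ A : Finset (Fin n → F), A.card = Fintype.card F ^ m ∧ diamW w A ≤ m * Mw w := by
  refine ⟨Finset.univ.filter fun u : Fin n → F => ∀ i : Fin n, m ≤ (i : ℕ) → u i = 0, ?_, ?_⟩
  · have h1 : (Finset.univ : Finset (Fin m → F)).card = Fintype.card F ^ m := by
      rw [Finset.card_univ]; simp [Fintype.card_fun]
    rw [← h1]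
    refine Finset.card_bij' (fun u _ => fun i : Fin m => u (Fin.castLE hm i))
      (fun v _ => fun i : Fin n => if h : (i : ℕ) < m then v ⟨i, h⟩ else 0)
      (fun u hu => Finset.mem_univ _) ?_ ?_ ?_
    · intro v _
      refine Finset.mem_filter.2 ⟨Finset.mem_univ _, fun i hi => ?_⟩
      simp [Nat.not_lt.2 hi]
    · intro u hu
      have hu2 := (Finset.mem_filter.1 hu).2
      funext i
      by_cases h : (i : ℕ) < m
      · simp [Fin.castLE, h]
      · simp [h, hu2 i (Nat.not_lt.1 h)]
    · intro v _
      funext i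
      simp [Fin.castLE, i.isLt]
  · apply Finset.sup_le
    rintro ⟨u, v⟩ hp
    rw [Finset.mem_product] at hp
    have hu : ∀ i : Fin n, m ≤ (i : ℕ) → u i = 0 := (Finset.mem_filter.1 hp.1).2
    have hv : ∀ i : Fin n, m ≤ (i : ℕ) → v i = 0 := (Finset.mem_filter.1 hp.2).2
    have hrho : rho (u - v) ≤ m := by
      apply Finset.sup_le
      intro i hi
      have hi2 : (u - v) i ≠ 0 := (Finset.mem_filter.1 hi).2
      by_contra hgt
      have h3 : m ≤ (i : ℕ) := by omega
      exact hi2 (by simp [hu i h3, hv i h3])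
    calc dChain w u v = chainWeight w (u - v) := rfl
      _ ≤ rho (u - v) * Mw w := chainWeight_le _
      _ ≤ m * Mw w := Nat.mul_le_mul_right _ hrho

/-- Singleton bound. -/
lemma singleton_bound {C : Finset (Fin n → F)} {k : ℕ} (hk1 : 1 ≤ k) (hkn : k ≤ n)
    (hcard : C.card = Fintype.card F ^ k) : dP C ≤ n - k + 1 := by
  have hq : 1 < Fintype.card F := Fintype.one_lt_card
  have hC2 : 1 < C.card := by
    rw [hcard]; exact Nat.one_lt_pow (by omega) hq
  by_contra hcon
  push_neg at hcon
  have hdP : n - k + 2 ≤ dP C := hcon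
  have hdn : dP C ≤ n := dP_le_n hC2
  have hk2 : 2 ≤ k := by omega
  -- injection C → (Fin (k-1) → F)
  have hinj : Set.InjOn (fun u : Fin n → F => fun i : Fin (k - 1) =>
      u ⟨n - k + 1 + (i : ℕ), by omega⟩) C := by
    intro x hx y hy heq
    by_contra hxy
    have hd := dP_le (Finset.mem_coe.1 hx) (Finset.mem_coe.1 hy) hxy
    obtain ⟨j, hj, hr⟩ := rho_spec (sub_ne_zero.2 hxy)
    have hjge : n - k + 1 ≤ (j : ℕ) := by omega
    have hjlt : (j : ℕ) - (n - k + 1) < k - 1 := by omega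
    have := congrFun heq ⟨(j : ℕ) - (n - k + 1), hjlt⟩
    simp only at this
    have hidx : (⟨n - k + 1 + ((j : ℕ) - (n - k + 1)), by omega⟩ : Fin n) = j :=
      Fin.ext (by simp; omega)
    rw [hidx] at this
    exact hj (by simp [Pi.sub_apply, this])
  have hle : C.card ≤ Fintype.card F ^ (k - 1) := by
    have h1 : (Finset.univ : Finset (Fin (k - 1) → F)).card = Fintype.card F ^ (k - 1) := by
      rw [Finset.card_univ]; simp [Fintype.card_fun]
    rw [← h1]
    exact Finset.card_le_card_of_injOn _ (fun _ _ => Finset.mem_univ _) hinj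
  rw [hcard] at hle
  have : Fintype.card F ^ (k - 1) < Fintype.card F ^ k :=
    Nat.pow_lt_pow_right hq (by omega)
  omega

end HelperSection

noncomputable section MainSection
open Finset
variable {F : Type*} [Field F] [Fintype F] {n : ℕ} {w : F → ℕ}

lemma main1 (hw : IsWeight w) (C : Finset (Fin n → F)) (k : ℕ)
    (hk1 : 1 ≤ k) (hkn : k ≤ n) (hcard : C.card = Fintype.card F ^ k) :
    (AstarW w n (floorW w n (dW w C)) * C.card = Fintype.card F ^ n ↔
      C.card = Fintype.card F ^ (n - dP C + 1)) := by
  have hq : 1 < Fintype.card F := Fintype.one_lt_card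
  have hC2 : 1 < C.card := by rw [hcard]; exact Nat.one_lt_pow (by omega) hq
  have hd1 : 1 ≤ dP C := dP_pos hC2
  have hdn : dP C ≤ n := dP_le_n hC2
  have hsing : dP C ≤ n - k + 1 := singleton_bound hk1 hkn hcard
  have hMw : 1 ≤ Mw w := Mw_pos hw
  have hdWpos : 1 ≤ dW w C := dW_pos hw hC2
  have hfl : floorW w n (dW w C) < dW w C := floorW_lt hdWpos
  have hiff : (C.card = Fintype.card F ^ (n - dP C + 1)) ↔ dP C = n - k + 1 := by
    rw [hcard]
    constructor
    · intro h
      have := Nat.pow_right_injective hq h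
      omega
    · intro h
      congr 1
      omega
  rw [hiff]
  constructor
  · intro hperf
    by_contra hne
    have hdle : dP C ≤ n - k := by omega
    have hnk1 : 1 ≤ n - k := by omega
    obtain ⟨x, hx, y, hy, hxy, hrxy⟩ := dP_mem hC2
    have hdWle : dW w C ≤ (n - k) * Mw w := by
      have h1 : dW w C ≤ dChain w x y := dW_le hx hy hxy
      have h2 : dChain w x y ≤ rho (x - y) * Mw w := chainWeight_le _
      have h3 : rho (x - y) * Mw w ≤ (n - k) * Mw w :=
        Nat.mul_le_mul_right _ (by omega)
      omega
    have hDlt : floorW w n (dW w C) < (n - k) * Mw w := by omega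
    have hA : AstarW w n (floorW w n (dW w C)) ≤
        (Fintype.card F - 1) * Fintype.card F ^ (n - k - 1) := by
      apply Finset.sup_le
      intro A _
      split_ifs with hAd
      · exact anticode_small hw hnk1 (by omega) (lt_of_le_of_lt hAd hDlt)
      · exact Nat.zero_le _
    have hfinal : AstarW w n (floorW w n (dW w C)) * C.card < Fintype.card F ^ n := by
      have hpos1 : 0 < Fintype.card F ^ (n - k - 1) := Nat.pow_pos (by omega)
      have hpos2 : 0 < Fintype.card F ^ k := Nat.pow_pos (by omega)
      calc AstarW w n (floorW w n (dW w C)) * C.card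
          ≤ ((Fintype.card F - 1) * Fintype.card F ^ (n - k - 1)) * Fintype.card F ^ k :=
            Nat.mul_le_mul hA (le_of_eq hcard)
        _ < (Fintype.card F * Fintype.card F ^ (n - k - 1)) * Fintype.card F ^ k := by
            gcongr
            omega
        _ = Fintype.card F ^ (1 + (n - k - 1) + k) := by
            rw [pow_add, pow_add, pow_one]
        _ = Fintype.card F ^ n := by congr 1; omega
    omega
  · intro hMDS
    have hnk : n - k = dP C - 1 := by omega
    have hupper : AstarW w n (floorW w n (dW w C)) ≤ Fintype.card F ^ (dP C - 1) := by
      apply Finset.sup_le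
      intro A _
      split_ifs with hAd
      · have hb := code_anticode A C (fun x hx y hy hxy =>
          lt_of_le_of_lt hAd (lt_of_lt_of_le hfl (dW_le hx hy hxy)))
        rw [hcard] at hb
        have hsplit : Fintype.card F ^ n =
            Fintype.card F ^ (dP C - 1) * Fintype.card F ^ k := by
          rw [← pow_add]; congr 1; omega
        rw [hsplit] at hb
        exact Nat.le_of_mul_le_mul_right hb (Nat.pow_pos (by omega))
      · exact Nat.zero_le _
    have hlower : Fintype.card F ^ (dP C - 1) ≤ AstarW w n (floorW w n (dW w C)) := by
      obtain ⟨A, hAcard, hAdiam⟩ := big_anticode (w := w) (n := n) (dP C - 1) (by omega)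
      have hAle : diamW w A ≤ floorW w n (dW w C) :=
        le_trans hAdiam (floorW_ge_dP hw hC2)
      calc Fintype.card F ^ (dP C - 1)
          = (if diamW w A ≤ floorW w n (dW w C) then A.card else 0) := by
            rw [if_pos hAle, hAcard]
        _ ≤ AstarW w n (floorW w n (dW w C)) :=
            Finset.le_sup (f := fun A : Finset (Fin n → F) =>
              if diamW w A ≤ floorW w n (dW w C) then A.card else 0) (Finset.mem_univ A)
    have hEq : AstarW w n (floorW w n (dW w C)) = Fintype.card F ^ (dP C - 1) :=
      le_antisymm hupper hlower
    rw [hEq, hcard, ← pow_add]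
    congr 1
    omega

lemma main2 (hw : IsWeight w) (C : Finset (Fin n → F))
    (hV : ∃ V : Submodule F (Fin n → F), (C : Set (Fin n → F)) = (V : Set (Fin n → F)))
    (hC0 : C ≠ {(0 : Fin n → F)}) :
    (AstarW w n (floorW w n (dW w C)) * C.card = Fintype.card F ^ n ↔
      C.card = Fintype.card F ^ (n - dP C + 1)) := by
  obtain ⟨V, hV⟩ := hV
  have hq : 1 < Fintype.card F := Fintype.one_lt_card
  have h0C : (0 : Fin n → F) ∈ C := by
    rw [← Finset.mem_coe, hV]; exact V.zero_mem
  have hex : ∃ x ∈ C, x ≠ 0 := by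
    by_contra h
    push_neg at h
    exact hC0 (Finset.eq_singleton_iff_unique_mem.2 ⟨h0C, h⟩)
  obtain ⟨x, hx, hxne⟩ := hex
  have hC2 : 1 < C.card := Finset.one_lt_card.2 ⟨x, hx, 0, h0C, hxne⟩
  haveI : Fintype V := Fintype.ofFinite _
  have hcard : C.card = Fintype.card F ^ Module.finrank F V := by
    have h1 : C.card = Fintype.card V := by
      rw [← Set.ncard_coe_finset, hV, ← Nat.card_coe_set_eq,
        SetLike.coe_sort_coe, Nat.card_eq_fintype_card]
    rw [h1, Module.card_eq_pow_finrank (K := F) (V := V)]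
  have hk1 : 1 ≤ Module.finrank F V := by
    by_contra h
    have h0 : Module.finrank F V = 0 := by omega
    rw [h0, pow_zero] at hcard
    omega
  have hkn : Module.finrank F V ≤ n := by
    have h1 := Submodule.finrank_le V
    rwa [Module.finrank_fin_fun F] at h1
  exact main1 hw C (Module.finrank F V) hk1 hkn hcard

end MainSection

theorem stmt12 {F : Type*} [Field F] [Fintype F] {n : ℕ} (hn : 1 ≤ n)
    (w : F → ℕ) (hw : IsWeight w) :
    (∀ C : Finset (Fin n → F), ∀ k : ℕ, 1 ≤ k → k ≤ n →
      C.card = Fintype.card F ^ k →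
      (AstarW w n (floorW w n (dW w C)) * C.card = Fintype.card F ^ n ↔
        C.card = Fintype.card F ^ (n - dP C + 1))) ∧
    (∀ C : Finset (Fin n → F),
      (∃ V : Submodule F (Fin n → F), (C : Set (Fin n → F)) = (V : Set (Fin n → F))) →
      C ≠ {(0 : Fin n → F)} →
      (AstarW w n (floorW w n (dW w C)) * C.card = Fintype.card F ^ n ↔
        C.card = Fintype.card F ^ (n - dP C + 1))) :=
  ⟨fun C k hk1 hkn hcard => main1 hw C k hk1 hkn hcard,
   fun C hV hC0 => main2 hw C hV hC0⟩
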